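/- Let M ∈ ℝ^{r×r} with singular values σ₁(M) ≥ … ≥ σ_r(M). Then max over Q ∈ SO(r) of Tr(QM) equals Σ_i σ_i(M) if det(M) ≥ 0, and equals Σ_i σ_i(M) − 2σ_r(M) if det(M) < 0. -/

import Mathlib

open Matrix Finset

private lemma aux_entry_le {r : ℕ} (A : Matrix (Fin r) (Fin r) ℝ)
    (h1 : Aᵀ * A = 1) (i : Fin r) : A i i ≤ 1 := by
  have h := congrFun (congrFun h1 i) i
  simp only [Matrix.mul_apply, Matrix.transpose_apply, Matrix.one_apply_eq] at h
  have hsq : A i i * A i i ≤ 1 := by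
    rw [← h]
    exact Finset.single_le_sum (f := fun k => A k i * A k i)
      (fun k _ => mul_self_nonneg _) (Finset.mem_univ i)
  nlinarith

private lemma aux_trace_le {r : ℕ} (A : Matrix (Fin r) (Fin r) ℝ)
    (h1 : Aᵀ * A = 1) (hdet : A.det = -1) :
    ∑ i, A i i ≤ (r : ℝ) - 2 := by
  have hdet0 : (1 + A).det = 0 := by
    have e1 : Aᵀ * (1 + A) = (1 + A)ᵀ := by
      rw [mul_add, mul_one, h1, transpose_add, transpose_one, add_comm]
    have e2 : Aᵀ.det * (1 + A).det = (1 + A).det := by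
      rw [← det_mul, e1, det_transpose]
    rw [det_transpose, hdet] at e2
    linarith
  obtain ⟨v, hv0, hv⟩ := (Matrix.exists_mulVec_eq_zero_iff).2 hdet0
  have hAv : A *ᵥ v = -v := by
    rw [add_mulVec, one_mulVec] at hv
    funext j
    have := congrFun hv j
    simp only [Pi.add_apply, Pi.neg_apply, Pi.zero_apply] at this ⊢
    linarith
  set n : ℝ := ∑ j, v j ^ 2 with hn_def
  have hn : 0 < n := by
    obtain ⟨j, hj⟩ := Function.ne_iff.1 hv0
    have : 0 < v j ^ 2 := pow_two_pos_of_ne_zero hj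
    exact lt_of_lt_of_le this (Finset.single_le_sum (f := fun k => v k ^ 2)
      (fun k _ => sq_nonneg _) (Finset.mem_univ j))
  set y : Fin r → ℝ := (Real.sqrt n)⁻¹ • v with hy_def
  have hsn : Real.sqrt n ≠ 0 := by positivity
  have hy1 : ∑ j, y j ^ 2 = 1 := by
    simp only [hy_def, Pi.smul_apply, smul_eq_mul, mul_pow, ← Finset.mul_sum]
    rw [← hn_def, inv_pow, Real.sq_sqrt hn.le, inv_mul_cancel₀ hn.ne']
  have hAy : A *ᵥ y = -y := by
    rw [hy_def, mulVec_smul, hAv, smul_neg]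
  have hATy : Aᵀ *ᵥ y = -y := by
    have : Aᵀ *ᵥ (A *ᵥ y) = y := by rw [mulVec_mulVec, h1, one_mulVec]
    rw [hAy, mulVec_neg] at this
    rw [← neg_eq_iff_eq_neg, this]
  have hyy : y ⬝ᵥ y = 1 := by simpa [dotProduct, sq] using hy1
  have key : ∀ i, A i i ≤ 1 - 2 * y i ^ 2 := by
    intro i
    set w : Fin r → ℝ := Pi.single i 1 - y i • y with hw_def
    have hAw : A *ᵥ w = (fun j => A j i) + y i • y := by
      rw [hw_def, mulVec_sub, mulVec_smul, hAy, mulVec_single]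
      funext j; simp [mul_comm]
    have S1 : w ⬝ᵥ (A *ᵥ w) = A i i + y i ^ 2 := by
      rw [hAw, hw_def]
      simp only [sub_dotProduct, dotProduct_add, dotProduct_smul, smul_dotProduct,
        single_dotProduct, smul_eq_mul, Pi.add_apply, Pi.smul_apply]
      have h1' : y ⬝ᵥ (fun j => A j i) = -y i := by
        have := congrFun hATy i
        simpa [mulVec, dotProduct, mul_comm] using this
      rw [h1', hyy]
      simp [dotProduct]
      ring
    have S2 : w ⬝ᵥ w = 1 - y i ^ 2 := by
      rw [hw_def]
      simp only [sub_dotProduct, dotProduct_sub, dotProduct_smul, smul_dotProduct,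
        single_dotProduct, dotProduct_single, smul_eq_mul]
      rw [hyy]
      ring_nf
      simp [sq]
    have S3 : (A *ᵥ w) ⬝ᵥ (A *ᵥ w) = w ⬝ᵥ w := by
      rw [dotProduct_mulVec, vecMul_mulVec, h1, vecMul_one]
    have hCS : (w ⬝ᵥ (A *ᵥ w)) ^ 2 ≤ (w ⬝ᵥ w) * ((A *ᵥ w) ⬝ᵥ (A *ᵥ w)) := by
      have := Finset.sum_mul_sq_le_sq_mul_sq Finset.univ w (A *ᵥ w)
      simpa [dotProduct, sq] using this
    rw [S3, S1, S2] at hCS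
    have hw2 : (0:ℝ) ≤ 1 - y i ^ 2 := by
      rw [← S2]; exact Finset.sum_nonneg (fun j _ => mul_self_nonneg (w j))
    nlinarith [hCS, hw2]
  calc ∑ i, A i i ≤ ∑ i, (1 - 2 * y i ^ 2) := Finset.sum_le_sum (fun i _ => key i)
    _ = (r : ℝ) - 2 := by
      rw [Finset.sum_sub_distrib, ← Finset.mul_sum, hy1]
      simp

theorem stmt13 {r : ℕ} (hr : 0 < r) (M : Matrix (Fin r) (Fin r) ℝ)
    (σ : Fin r → ℝ) (hσ0 : ∀ i, 0 ≤ σ i) (hσmono : Antitone σ)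
    (U V : Matrix (Fin r) (Fin r) ℝ)
    (hU : U ∈ Matrix.orthogonalGroup (Fin r) ℝ)
    (hV : V ∈ Matrix.orthogonalGroup (Fin r) ℝ)
    (hM : M = U * Matrix.diagonal σ * V) :
    IsGreatest
      {x : ℝ | ∃ Q ∈ Matrix.orthogonalGroup (Fin r) ℝ, Q.det = 1 ∧ (Q * M).trace = x}
      (if 0 ≤ M.det then ∑ i, σ i else (∑ i, σ i) - 2 * σ ⟨r - 1, by omega⟩) := by
  set L : Fin r := ⟨r - 1, by omega⟩ with hL
  set D : Matrix (Fin r) (Fin r) ℝ := Matrix.diagonal σ with hD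
  have hU1 : Uᵀ * U = 1 := (Matrix.mem_orthogonalGroup_iff' _ _).1 hU
  have hU2 : U * Uᵀ = 1 := (Matrix.mem_orthogonalGroup_iff _ _).1 hU
  have hV1 : Vᵀ * V = 1 := (Matrix.mem_orthogonalGroup_iff' _ _).1 hV
  have hV2 : V * Vᵀ = 1 := (Matrix.mem_orthogonalGroup_iff _ _).1 hV
  set s : ℝ := U.det * V.det with hs_def
  have hdU : U.det * U.det = 1 := by
    have := congrArg Matrix.det hU1
    rwa [det_mul, det_transpose, det_one] at this
  have hdV : V.det * V.det = 1 := by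
    have := congrArg Matrix.det hV1
    rwa [det_mul, det_transpose, det_one] at this
  have hss : s * s = 1 := by rw [hs_def]; ring_nf; nlinarith [hdU, hdV]
  have hs1 : s = 1 ∨ s = -1 := mul_self_eq_one_iff.1 hss
  have hdetM : M.det = s * ∏ i, σ i := by
    rw [hM, det_mul, det_mul, det_diagonal, hs_def]; ring
  have hprod : 0 ≤ ∏ i, σ i := Finset.prod_nonneg (fun i _ => hσ0 i)
  have hiL : ∀ i : Fin r, i ≤ L := by
    intro i; rw [hL, Fin.le_def]; simp; omega
  -- general trace formula
  have htr : ∀ Q : Matrix (Fin r) (Fin r) ℝ,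
      (Q * M).trace = ∑ i, (V * Q * U) i i * σ i := by
    intro Q
    have e1 : Q * M = (Q * U * D) * V := by rw [hM]; simp only [Matrix.mul_assoc, hD]
    have e2 : V * (Q * U * D) = (V * Q * U) * D := by simp only [Matrix.mul_assoc]
    rw [e1, Matrix.trace_mul_comm, e2]
    simp [Matrix.trace, Matrix.diag, Matrix.mul_diagonal, hD]
  -- the witness
  set f : Fin r → ℝ := fun i => if i = L then s else 1 with hf
  have hff : ∀ i, f i * f i = 1 := by
    intro i; rw [hf]; by_cases h : i = L <;> simp [h, hss]
  set S : Matrix (Fin r) (Fin r) ℝ := Matrix.diagonal f with hS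
  have hSS : S * S = 1 := by
    rw [hS, diagonal_mul_diagonal, show (fun i => f i * f i) = fun _ : Fin r => (1:ℝ) from funext hff, diagonal_one]
  have hdS : S.det = s := by
    rw [hS, det_diagonal, hf]
    rw [Finset.prod_ite_eq' Finset.univ L (fun _ => s)]
    simp
  set Q₀ : Matrix (Fin r) (Fin r) ℝ := Vᵀ * S * Uᵀ with hQ₀
  have hQ₀T : star Q₀ = U * S * V := by
    show Q₀ᵀ = _
    have hST : Sᵀ = S := by rw [hS, diagonal_transpose]
    rw [hQ₀, transpose_mul, transpose_mul, transpose_transpose, transpose_transpose,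
      hST, ← Matrix.mul_assoc]
  have hQ₀mem : Q₀ ∈ Matrix.orthogonalGroup (Fin r) ℝ := by
    rw [Matrix.mem_orthogonalGroup_iff, show Q₀ᵀ = U * S * V from hQ₀T, hQ₀]
    calc Vᵀ * S * Uᵀ * (U * S * V) = Vᵀ * (S * ((Uᵀ * U) * (S * V))) := by
          simp only [Matrix.mul_assoc]
      _ = Vᵀ * ((S * S) * V) := by rw [hU1, one_mul, Matrix.mul_assoc]
      _ = 1 := by rw [hSS, one_mul, hV1]
  have hQ₀det : Q₀.det = 1 := by
    rw [hQ₀, det_mul, det_mul, det_transpose, det_transpose, hdS]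
    calc V.det * s * U.det = s * s := by rw [hs_def]; ring
      _ = 1 := hss
  have hVQU : V * Q₀ * U = S := by
    rw [hQ₀]
    calc V * (Vᵀ * S * Uᵀ) * U = (V * Vᵀ) * (S * (Uᵀ * U)) := by
          simp only [Matrix.mul_assoc]
      _ = S := by rw [hV2, hU1, one_mul, mul_one]
  have hQ₀tr : (Q₀ * M).trace = (∑ i, σ i) - (1 - s) * σ L := by
    rw [htr Q₀, hVQU]
    have : ∀ i ∈ Finset.univ, S i i * σ i
        = σ i + (if i = L then (s - 1) * σ L else 0) := by
      intro i _
      rw [hS, diagonal_apply_eq, hf]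
      by_cases h : i = L
      · simp [h]; ring
      · simp [h]
    rw [Finset.sum_congr rfl this, Finset.sum_add_distrib,
      Finset.sum_ite_eq' Finset.univ L (fun _ => (s - 1) * σ L)]
    simp; ring
  constructor
  · -- membership
    split_ifs with h
    · have hkey : (1 - s) * σ L = 0 := by
        rcases hs1 with h1 | h1
        · rw [h1]; ring
        · have hMd : M.det = -∏ i, σ i := by rw [hdetM, h1]; ring
          have hp0 : ∏ i, σ i = 0 := le_antisymm (by linarith) hprod
          obtain ⟨i, _, hi0⟩ := Finset.prod_eq_zero_iff.1 hp0
          have : σ L ≤ σ i := hσmono (hiL i)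
          have : σ L = 0 := le_antisymm (by rw [← hi0]; exact hσmono (hiL i)) (hσ0 L)
          rw [this]; ring
      exact ⟨Q₀, hQ₀mem, hQ₀det, by rw [hQ₀tr, hkey, sub_zero]⟩
    · have hsneg : s = -1 := by
        rcases hs1 with h1 | h1
        · exfalso; rw [hdetM, h1, one_mul] at h; exact h hprod
        · exact h1
      exact ⟨Q₀, hQ₀mem, hQ₀det, by rw [hQ₀tr, hsneg]; ring⟩
  · -- upper bound
    rintro x ⟨Q, hQmem, hQdet, hQtr⟩
    set A : Matrix (Fin r) (Fin r) ℝ := V * Q * U with hA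
    have hQ1 : Qᵀ * Q = 1 := (Matrix.mem_orthogonalGroup_iff' _ _).1 hQmem
    have hA1 : Aᵀ * A = 1 := by
      rw [hA, transpose_mul, transpose_mul]
      calc Uᵀ * (Qᵀ * Vᵀ) * (V * Q * U) = Uᵀ * (Qᵀ * ((Vᵀ * V) * (Q * U))) := by
            simp only [Matrix.mul_assoc]
        _ = Uᵀ * ((Qᵀ * Q) * U) := by rw [hV1, one_mul, Matrix.mul_assoc]
        _ = 1 := by rw [hQ1, one_mul, hU1]
    have hxval : x = ∑ i, A i i * σ i := by rw [← hQtr, htr Q, hA]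
    have hAentry : ∀ i, A i i ≤ 1 := aux_entry_le A hA1
    split_ifs with h
    · rw [hxval]
      exact Finset.sum_le_sum (fun i _ => by
        nlinarith [hAentry i, hσ0 i])
    · have hsneg : s = -1 := by
        rcases hs1 with h1 | h1
        · exfalso; rw [hdetM, h1, one_mul] at h; exact h hprod
        · exact h1
      have hAdet : A.det = -1 := by
        rw [hA, det_mul, det_mul, hQdet]
        calc V.det * 1 * U.det = s := by rw [hs_def]; ring
          _ = -1 := hsneg
      have htrA : ∑ i, A i i ≤ (r : ℝ) - 2 := aux_trace_le A hA1 hAdet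
      have hstep : ∀ i ∈ Finset.univ, A i i * σ i ≤ σ i - (1 - A i i) * σ L := by
        intro i _
        have e2 : σ L ≤ σ i := hσmono (hiL i)
        nlinarith [hAentry i, hσ0 L]
      have hsum : x ≤ ∑ i, (σ i - (1 - A i i) * σ L) := by
        rw [hxval]; exact Finset.sum_le_sum hstep
      have heq : ∑ i, (σ i - (1 - A i i) * σ L)
          = (∑ i, σ i) - ((r : ℝ) - ∑ i, A i i) * σ L := by
        rw [Finset.sum_sub_distrib]
        congr 1
        rw [← Finset.sum_mul, Finset.sum_sub_distrib]
        simp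
      rw [heq] at hsum
      have : 2 * σ L ≤ ((r : ℝ) - ∑ i, A i i) * σ L := by
        apply mul_le_mul_of_nonneg_right _ (hσ0 L)
        linarith
      calc x ≤ _ := hsum
        _ ≤ (∑ i, σ i) - 2 * σ L := by linarith
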